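/- arXiv:2305.00689 — 3 statements merged into one kernel-verified Lean document; each statement's English description precedes it below -/
import Mathlib

section
/- Let H_Z : F_2^n → F_2^{n_Z}, H : F_2^t → F_2^s with H surjective (independent checks), and suppose the code ker(H_Z) has soundness ρ_Z, i.e., |H_Z u|/n_Z ≥ ρ_Z |u − z|/n for the closest z ∈ ker H_Z. Consider the map ∂_2ᵀ : (F_2^n ⊗ F_2^t) ⊕ (F_2^{n_X} ⊗ F_2^s) → (F_2^{n_Z} ⊗ F_2^t) ⊕ (F_2^n ⊗ F_2^s) given by ∂_2ᵀ(α, β) = (H_Z ⊗ I)(α) ⊕ ((I ⊗ H)(α) + (H_Xᵀ ⊗ I)(β)) arising from the homological product of a CSS chain complex with the cocomplex of H. Then the code with parity-check matrix ∂_2ᵀ has soundness at least (1/(s+1))·min(n_Z ρ_Z / n, 1)·(nt + n_X s)/(n_Z t + n s). -/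
open Matrix

/-- Hamming distance from a word to the kernel of a parity-check matrix. -/
noncomputable def distToKer {α β : Type*} [Fintype α] [Fintype β]
    (M : Matrix β α (ZMod 2)) (x : α → ZMod 2) : ℕ :=
  sInf (hammingDist x '' {y | M.mulVec y = 0})

/-- The coboundary map `∂₂ᵀ : C₁ → C₂` of the homological product of the CSS chain complex
`(H_Zᵀ, H_X)` with the cocomplex of the classical code `H`, written as a matrix:
`∂₂ᵀ(α, β) = ((H_Z ⊗ I) α, (I ⊗ H) α + (H_Xᵀ ⊗ I) β)`. -/
def d2T {Q X Z S T : Type*} (HX : Matrix X Q (ZMod 2)) (HZ : Matrix Z Q (ZMod 2))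
    (H : Matrix S T (ZMod 2)) [DecidableEq T] [DecidableEq Q] [DecidableEq S] :
    Matrix ((Z × T) ⊕ (Q × S)) ((Q × T) ⊕ (X × S)) (ZMod 2) :=
  Matrix.of fun r c =>
    match r, c with
    | Sum.inl (i, j), Sum.inl (p, j') => if j = j' then HZ i p else 0
    | Sum.inl _, Sum.inr _ => 0
    | Sum.inr (p, q), Sum.inl (p', j) => if p = p' then H q j else 0
    | Sum.inr (p, q), Sum.inr (r, q') => if q = q' then HX r p else 0

/-! ### Auxiliary lemmas -/

/-- Indicator of a bit being nonzero. -/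
def ind2 (a : ZMod 2) : ℕ := if a = 0 then 0 else 1

lemma hammingNorm_eq_sum_ind2 {ι : Type*} [Fintype ι] (f : ι → ZMod 2) :
    hammingNorm f = ∑ i, ind2 (f i) := by
  classical
  rw [hammingNorm, Finset.card_filter]
  refine Finset.sum_congr rfl fun i _ => ?_
  by_cases h : f i = 0 <;> simp [ind2, h]

lemma hammingDist_eq_sum_ind2 {ι : Type*} [Fintype ι] (f g : ι → ZMod 2) :
    hammingDist f g = ∑ i, ind2 (f i - g i) := by
  classical
  rw [hammingDist, Finset.card_filter]
  refine Finset.sum_congr rfl fun i _ => ?_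
  by_cases h : f i = g i <;> simp [ind2, h, sub_eq_zero]

lemma ind2_add_le (a b : ZMod 2) : ind2 (a + b) ≤ ind2 a + ind2 b := by
  by_cases ha : a = 0 <;> by_cases hb : b = 0 <;> simp [ind2, ha, hb] <;> split <;> omega

lemma ind2_sub_le (a b : ZMod 2) : ind2 (a - b) ≤ ind2 a + ind2 b := by
  by_cases ha : a = 0 <;> by_cases hb : b = 0 <;>
    simp [ind2, ha, hb, sub_eq_zero] <;> split <;> omega

lemma mul_sum_comm {P J M : Type*} [Fintype P] [Fintype J] [NonUnitalNonAssocSemiring M]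
    (f : P → M) (h : P → J → M) :
    ∑ p, f p * ∑ j, h p j = ∑ j, ∑ p, f p * h p j := by
  simp_rw [Finset.mul_sum]
  exact Finset.sum_comm

lemma distToKer_le {α β : Type*} [Fintype α] [Fintype β]
    (M : Matrix β α (ZMod 2)) (x y : α → ZMod 2) (hy : M.mulVec y = 0) :
    distToKer M x ≤ hammingDist x y :=
  Nat.sInf_le ⟨y, hy, rfl⟩

lemma distToKer_exists {α β : Type*} [Fintype α] [Fintype β]
    (M : Matrix β α (ZMod 2)) (x : α → ZMod 2) :
    ∃ y, M.mulVec y = 0 ∧ distToKer M x = hammingDist x y := by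
  have hne : (hammingDist x '' {y | M.mulVec y = 0}).Nonempty :=
    ⟨hammingDist x 0, 0, by simp [Matrix.mulVec_zero], rfl⟩
  obtain ⟨y, hy, he⟩ := Nat.sInf_mem hne
  exact ⟨y, hy, he.symm⟩

lemma exists_right_inverse_small_support {s t : ℕ} (H : Matrix (Fin s) (Fin t) (ZMod 2))
    (hind : LinearIndependent (ZMod 2) (fun i : Fin s => H i)) :
    ∃ K : Matrix (Fin t) (Fin s) (ZMod 2), H * K = 1 ∧
      ∀ v : Fin s → ZMod 2, hammingNorm (K.mulVec v) ≤ s := by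
  classical
  have hspan : Submodule.span (ZMod 2) (Set.range Hᵀ) = ⊤ := by
    have h1 : H.rank = Module.finrank (ZMod 2) (Submodule.span (ZMod 2) (Set.range H)) :=
      H.rank_eq_finrank_span_row
    have h2 : H.rank = Module.finrank (ZMod 2) (Submodule.span (ZMod 2) (Set.range Hᵀ)) :=
      H.rank_eq_finrank_span_cols
    have h3 : Module.finrank (ZMod 2) (Submodule.span (ZMod 2) (Set.range H)) = s := by
      rw [finrank_span_eq_card hind, Fintype.card_fin]
    apply Submodule.eq_top_of_finrank_eq
    rw [← h2, h1, h3, Module.finrank_pi, Fintype.card_fin]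
  obtain ⟨b, hbsub, hbspan, hbind⟩ := exists_linearIndependent (ZMod 2) (Set.range Hᵀ)
  rw [hspan] at hbspan
  have hbfin : b.Finite := (Set.finite_range Hᵀ).subset hbsub
  haveI : Fintype b := hbfin.fintype
  have hcard : Fintype.card b = s := by
    have h4 := finrank_span_set_eq_card hbind
    rw [hbspan, finrank_top, Module.finrank_pi, Fintype.card_fin] at h4
    rw [← Set.toFinset_card, ← h4]
  obtain ⟨e⟩ : Nonempty (Fin s ≃ b) := ⟨(Fintype.equivFinOfCardEq hcard).symm⟩
  have hchoice : ∀ q : Fin s, ∃ τ : Fin t, Hᵀ τ = (e q : Fin s → ZMod 2) := fun q =>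
    hbsub (e q).2
  choose g hg using hchoice
  set B : Matrix (Fin s) (Fin s) (ZMod 2) := fun q q' => H q (g q') with hB
  have hBcols : ∀ q', Bᵀ q' = (e q' : Fin s → ZMod 2) := by
    intro q'; funext q; rw [← hg q']; rfl
  have hBunit : IsUnit B := by
    rw [← linearIndependent_cols_iff_isUnit]
    have : (fun q' => Bᵀ q') = (fun q' => ((e q' : Fin s → ZMod 2))) := funext hBcols
    rw [show B.col = fun q' => Bᵀ q' from rfl, this]
    exact hbind.comp e e.injective
  have hBinv : B * B⁻¹ = 1 := mul_nonsing_inv B ((isUnit_iff_isUnit_det B).mp hBunit)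
  set K : Matrix (Fin t) (Fin s) (ZMod 2) :=
    Matrix.of fun τ q => ∑ q' : Fin s, if g q' = τ then B⁻¹ q' q else 0 with hK
  refine ⟨K, ?_, ?_⟩
  · ext q q''
    simp only [hK, Matrix.mul_apply, Matrix.of_apply, Finset.mul_sum]
    rw [Finset.sum_comm]
    have : ∀ q' : Fin s, ∑ τ : Fin t, H q τ * (if g q' = τ then B⁻¹ q' q'' else 0)
        = B q q' * B⁻¹ q' q'' := by
      intro q'
      rw [Finset.sum_eq_single (g q')]
      · simp [hB]
      · intro τ _ hτ; simp [Ne.symm hτ]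
      · simp
    rw [Finset.sum_congr rfl (fun q' _ => this q'), ← Matrix.mul_apply, hBinv]
  · intro v
    have hsupp : ∀ τ, τ ∉ Finset.univ.image g → K.mulVec v τ = 0 := by
      intro τ hτ
      simp only [hK, Matrix.mulVec, dotProduct, Matrix.of_apply]
      apply Finset.sum_eq_zero
      intro q _
      have : ∀ q' : Fin s, g q' ≠ τ := by
        intro q' he
        exact hτ (Finset.mem_image.mpr ⟨q', Finset.mem_univ _, he⟩)
      simp only [this, if_false, Finset.sum_const_zero, zero_mul]
    calc hammingNorm _ ≤ (Finset.univ.image g).card := by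
          apply Finset.card_le_card
          intro τ hτ
          simp only [hammingNorm, Finset.mem_filter, Finset.mem_univ, true_and] at hτ
          by_contra hc
          exact hτ (hsupp τ hc)
      _ ≤ s := by simpa using Finset.card_image_le (s := Finset.univ) (f := g)

section components

variable {n nX nZ s t : ℕ}
variable (HX : Matrix (Fin nX) (Fin n) (ZMod 2)) (HZ : Matrix (Fin nZ) (Fin n) (ZMod 2))
variable (H : Matrix (Fin s) (Fin t) (ZMod 2))

lemma d2T_mulVec_inl (w : (Fin n × Fin t) ⊕ (Fin nX × Fin s) → ZMod 2) (i : Fin nZ) (j : Fin t) :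
    (d2T HX HZ H).mulVec w (Sum.inl (i, j)) = ∑ p, HZ i p * w (Sum.inl (p, j)) := by
  classical
  simp only [Matrix.mulVec, dotProduct, Fintype.sum_sum_type, Fintype.sum_prod_type]
  rw [show ∑ b : Fin nX, ∑ q : Fin s,
      (d2T HX HZ H) (Sum.inl (i, j)) (Sum.inr (b, q)) * w (Sum.inr (b, q)) = 0 by
    apply Finset.sum_eq_zero; intro r _; apply Finset.sum_eq_zero; intro q _
    simp [d2T]]
  rw [add_zero]
  refine Finset.sum_congr rfl fun p _ => ?_
  rw [Finset.sum_eq_single j]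
  · simp [d2T]
  · intro j' _ hj'; simp [d2T, Ne.symm hj']
  · simp

lemma d2T_mulVec_inr (w : (Fin n × Fin t) ⊕ (Fin nX × Fin s) → ZMod 2) (p : Fin n) (q : Fin s) :
    (d2T HX HZ H).mulVec w (Sum.inr (p, q)) =
      (∑ j, H q j * w (Sum.inl (p, j))) + ∑ r, HX r p * w (Sum.inr (r, q)) := by
  classical
  simp only [Matrix.mulVec, dotProduct, Fintype.sum_sum_type, Fintype.sum_prod_type]
  congr 1
  · rw [Finset.sum_comm]
    refine Finset.sum_congr rfl fun j _ => ?_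
    rw [Finset.sum_eq_single p]
    · simp [d2T]
    · intro p' _ hp'; simp [d2T, Ne.symm hp']
    · simp
  · refine Finset.sum_congr rfl fun r _ => ?_
    rw [Finset.sum_eq_single q]
    · simp [d2T]
    · intro q' _ hq'; simp [d2T, Ne.symm hq']
    · simp

end components

set_option maxHeartbeats 2000000 in
/-- Lemma 3 (soundness of the X-operators): if `H_Z` has soundness `ρ_Z` and the classical
parity-check matrix `H` has independent checks, then the code with parity-check matrix
`∂₂ᵀ` has soundness at least `(1/(s+1)) · min(n_Z ρ_Z / n, 1) · (nt + n_X s)/(n_Z t + n s)`. -/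
theorem stmt9 (n nX nZ s t : ℕ)
    (HX : Matrix (Fin nX) (Fin n) (ZMod 2)) (HZ : Matrix (Fin nZ) (Fin n) (ZMod 2))
    (H : Matrix (Fin s) (Fin t) (ZMod 2))
    (hchain : HX * HZ.transpose = 0)
    (hind : LinearIndependent (ZMod 2) (fun i : Fin s => H i))
    (ρZ : ℝ)
    (hsound : ∀ u : Fin n → ZMod 2,
      (hammingNorm (HZ.mulVec u) : ℝ) / nZ ≥ ρZ * (distToKer HZ u : ℝ) / n) :
    ∀ x : (Fin n × Fin t) ⊕ (Fin nX × Fin s) → ZMod 2,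
      (hammingNorm ((d2T HX HZ H).mulVec x) : ℝ) / ((nZ * t + n * s : ℕ) : ℝ) ≥
        (1 / ((s : ℝ) + 1) * min ((nZ : ℝ) * ρZ / n) 1 *
            (((n * t + nX * s : ℕ) : ℝ) / ((nZ * t + n * s : ℕ) : ℝ))) *
          (distToKer (d2T HX HZ H) x : ℝ) / ((n * t + nX * s : ℕ) : ℝ) := by
  classical
  intro x
  set m : ℝ := min ((nZ : ℝ) * ρZ / n) 1 with hm_def
  -- key per-column soundness bound
  have key : ∀ u : Fin n → ZMod 2,
      m * (distToKer HZ u : ℝ) ≤ (hammingNorm (HZ.mulVec u) : ℝ) := by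
    intro u
    rcases le_or_gt m 0 with hm | hm
    · calc m * (distToKer HZ u : ℝ) ≤ 0 :=
            mul_nonpos_of_nonpos_of_nonneg hm (Nat.cast_nonneg _)
        _ ≤ _ := Nat.cast_nonneg _
    · have ha : (0:ℝ) < (nZ : ℝ) * ρZ / n := lt_of_lt_of_le hm (min_le_left _ _)
      have hnZ : (0:ℝ) < nZ := by
        rcases Nat.eq_zero_or_pos nZ with h0 | h0
        · subst h0; simp at ha
        · exact_mod_cast h0
      have hn : (0:ℝ) < n := by
        rcases Nat.eq_zero_or_pos n with h0 | h0
        · subst h0; simp at ha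
        · exact_mod_cast h0
      have hs := hsound u
      rw [ge_iff_le, div_le_div_iff₀ hn hnZ] at hs
      calc m * (distToKer HZ u : ℝ) ≤ ((nZ : ℝ) * ρZ / n) * (distToKer HZ u : ℝ) :=
            mul_le_mul_of_nonneg_right (min_le_left _ _) (Nat.cast_nonneg _)
        _ = (ρZ * (distToKer HZ u : ℝ) * nZ) / n := by ring
        _ ≤ ((hammingNorm (HZ.mulVec u) : ℝ) * n) / n :=
            div_le_div_of_nonneg_right hs hn.le
        _ = _ := mul_div_cancel_right₀ _ hn.ne'
  obtain ⟨K, hHK, hKs⟩ := exists_right_inverse_small_support H hind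
  set α : Fin n → Fin t → ZMod 2 := fun p j => x (Sum.inl (p, j)) with hα
  set β : Fin nX → Fin s → ZMod 2 := fun r q => x (Sum.inr (r, q)) with hβ
  set colα : Fin t → Fin n → ZMod 2 := fun j p => α p j with hcolα
  choose z hz hdz using fun j => distToKer_exists HZ (colα j)
  set at' : Fin n → Fin t → ZMod 2 := fun p j => α p j - z j p with hat'
  set σ' : Fin n → Fin s → ZMod 2 :=
    fun p q => (∑ j, H q j * z j p) + ∑ r, HX r p * β r q with hσ'
  set δ : Fin n → Fin t → ZMod 2 := fun p j => K.mulVec (σ' p) j with hδ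
  set y : (Fin n × Fin t) ⊕ (Fin nX × Fin s) → ZMod 2 :=
    Sum.elim (fun pj => z pj.2 pj.1 + δ pj.1 pj.2) (fun rq => β rq.1 rq.2) with hy
  -- the columns of σ' lie in the kernel of HZ
  have hσ'ker : ∀ (q : Fin s) (i : Fin nZ), ∑ p, HZ i p * σ' p q = 0 := by
    intro q i
    have hzc : ∀ j : Fin t, ∑ p, HZ i p * z j p = 0 := by
      intro j
      have := congrFun (hz j) i
      simpa [Matrix.mulVec, dotProduct] using this
    have hxc : ∀ r : Fin nX, ∑ p, HX r p * HZ i p = 0 := by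
      intro r
      have := congrFun (congrFun hchain r) i
      simpa [Matrix.mul_apply, Matrix.transpose_apply] using this
    have e1 : ∑ p, HZ i p * ∑ j, H q j * z j p = 0 := by
      rw [mul_sum_comm]
      refine Finset.sum_eq_zero fun j _ => ?_
      have h' : ∑ p, HZ i p * (H q j * z j p) = H q j * ∑ p, HZ i p * z j p := by
        rw [Finset.mul_sum]
        exact Finset.sum_congr rfl fun p _ => by ring
      rw [h', hzc, mul_zero]
    have e2 : ∑ p, HZ i p * ∑ r, HX r p * β r q = 0 := by
      rw [mul_sum_comm]
      refine Finset.sum_eq_zero fun r _ => ?_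
      have h' : ∑ p, HZ i p * (HX r p * β r q) = β r q * ∑ p, HX r p * HZ i p := by
        rw [Finset.mul_sum]
        exact Finset.sum_congr rfl fun p _ => by ring
      rw [h', hxc, mul_zero]
    simp only [hσ', mul_add]
    rw [Finset.sum_add_distrib, e1, e2, add_zero]
  -- y is in the kernel
  have hker : (d2T HX HZ H).mulVec y = 0 := by
    funext c
    cases c with
    | inl ij =>
      obtain ⟨i, j⟩ := ij
      rw [d2T_mulVec_inl]
      simp only [hy, Sum.elim_inl]
      calc ∑ p, HZ i p * (z j p + δ p j)
          = (∑ p, HZ i p * z j p) + ∑ p, HZ i p * δ p j := by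
            rw [← Finset.sum_add_distrib]
            exact Finset.sum_congr rfl fun p _ => mul_add _ _ _
        _ = 0 + ∑ q, K j q * ∑ p, HZ i p * σ' p q := by
            congr 1
            · have := congrFun (hz j) i
              simpa [Matrix.mulVec, dotProduct] using this
            · simp only [hδ, Matrix.mulVec, dotProduct]
              rw [mul_sum_comm]
              refine Finset.sum_congr rfl fun q _ => ?_
              rw [Finset.mul_sum]
              exact Finset.sum_congr rfl fun p _ => by ring
        _ = 0 := by simp [hσ'ker]
    | inr pq =>
      obtain ⟨p, q⟩ := pq
      rw [d2T_mulVec_inr]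
      simp only [hy, Sum.elim_inl, Sum.elim_inr]
      have hδsum : ∑ j, H q j * δ p j = σ' p q := by
        have h1 : H.mulVec (K.mulVec (σ' p)) = σ' p := by
          rw [Matrix.mulVec_mulVec, hHK, Matrix.one_mulVec]
        have := congrFun h1 q
        simpa [Matrix.mulVec, dotProduct, hδ] using this
      have hsplit : ∑ j, H q j * (z j p + δ p j)
          = (∑ j, H q j * z j p) + ∑ j, H q j * δ p j := by
        rw [← Finset.sum_add_distrib]
        exact Finset.sum_congr rfl fun j _ => mul_add _ _ _
      calc (∑ j, H q j * (z j p + δ p j)) + ∑ r, HX r p * β r q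
          = (((∑ j, H q j * z j p) + ∑ r, HX r p * β r q) + ∑ j, H q j * δ p j) := by
            rw [hsplit]; ring
        _ = σ' p q + σ' p q := by rw [hδsum]
        _ = 0 := CharTwo.add_self_eq_zero _
  -- syndrome decomposition
  set σQ : Fin n → Fin s → ZMod 2 :=
    fun p q => (∑ j, H q j * α p j) + ∑ r, HX r p * β r q with hσQ
  set SZ : ℕ := ∑ j, hammingNorm (HZ.mulVec (colα j)) with hSZ
  set SQ : ℕ := ∑ p, hammingNorm (σQ p) with hSQ
  set A : ℕ := ∑ j, distToKer HZ (colα j) with hA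
  have hσnorm : hammingNorm ((d2T HX HZ H).mulVec x) = SZ + SQ := by
    rw [hammingNorm_eq_sum_ind2, Fintype.sum_sum_type, Fintype.sum_prod_type,
      Fintype.sum_prod_type]
    congr 1
    · rw [Finset.sum_comm]
      refine Finset.sum_congr rfl fun j _ => ?_
      rw [hammingNorm_eq_sum_ind2]
      refine Finset.sum_congr rfl fun i _ => ?_
      congr 1
      rw [d2T_mulVec_inl]
      simp [Matrix.mulVec, dotProduct, hcolα, hα]
    · refine Finset.sum_congr rfl fun p _ => ?_
      rw [hammingNorm_eq_sum_ind2]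
      refine Finset.sum_congr rfl fun q _ => ?_
      congr 1
      rw [d2T_mulVec_inr]
  -- σ' vs σQ
  have hid : ∀ p, σ' p = σQ p + fun q => ∑ j, H q j * (z j p - α p j) := by
    intro p
    funext q
    simp only [hσ', hσQ, Pi.add_apply]
    rw [add_right_comm, ← Finset.sum_add_distrib]
    congr 1
    refine Finset.sum_congr rfl fun j _ => by ring
  -- distance from x to y
  have hdist1 : hammingDist x y ≤ A + ∑ p, hammingNorm (K.mulVec (σ' p)) := by
    have hAalt : A = ∑ p, ∑ j, ind2 (at' p j) := by
      rw [hA, Finset.sum_comm]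
      refine Finset.sum_congr rfl fun j _ => ?_
      rw [hdz j, hammingDist_eq_sum_ind2]
    rw [hammingDist_eq_sum_ind2, Fintype.sum_sum_type, Fintype.sum_prod_type,
      Fintype.sum_prod_type]
    have hinr : ∑ r, ∑ q, ind2 (x (Sum.inr (r, q)) - y (Sum.inr (r, q))) = 0 := by
      refine Finset.sum_eq_zero fun r _ => Finset.sum_eq_zero fun q _ => ?_
      simp [hy, hβ, ind2]
    rw [hinr, add_zero, hAalt]
    calc ∑ p, ∑ j, ind2 (x (Sum.inl (p, j)) - y (Sum.inl (p, j)))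
        ≤ ∑ p, ∑ j, (ind2 (at' p j) + ind2 (δ p j)) := by
          refine Finset.sum_le_sum fun p _ => Finset.sum_le_sum fun j _ => ?_
          have hxy : x (Sum.inl (p, j)) - y (Sum.inl (p, j)) = at' p j - δ p j := by
            simp only [hy, Sum.elim_inl, hat', hα]
            ring
          rw [hxy]
          exact ind2_sub_le _ _
      _ = (∑ p, ∑ j, ind2 (at' p j)) + ∑ p, ∑ j, ind2 (δ p j) := by
          rw [← Finset.sum_add_distrib]
          exact Finset.sum_congr rfl fun p _ => Finset.sum_add_distrib
      _ = (∑ p, ∑ j, ind2 (at' p j)) + ∑ p, hammingNorm (K.mulVec (σ' p)) := by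
          congr 1
          exact Finset.sum_congr rfl fun p _ => (hammingNorm_eq_sum_ind2 _).symm
  -- bound the correction weight
  have hδbound : ∑ p, hammingNorm (K.mulVec (σ' p)) ≤ s * (SQ + A) := by
    have hAalt : A = ∑ p, ∑ j, ind2 (at' p j) := by
      rw [hA, Finset.sum_comm]
      refine Finset.sum_congr rfl fun j _ => ?_
      rw [hdz j, hammingDist_eq_sum_ind2]
    calc ∑ p, hammingNorm (K.mulVec (σ' p))
        ≤ ∑ p, s * (hammingNorm (σQ p) + ∑ j, ind2 (at' p j)) := by
          refine Finset.sum_le_sum fun p _ => ?_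
          by_cases hzero : σ' p = 0
          · rw [hzero]
            simp [Matrix.mulVec_zero, hammingNorm]
          · have h1 : 1 ≤ hammingNorm (σQ p) + ∑ j, ind2 (at' p j) := by
              by_contra hcon
              push_neg at hcon
              interval_cases h : (hammingNorm (σQ p) + ∑ j, ind2 (at' p j))
              have hq0 : hammingNorm (σQ p) = 0 := by omega
              have hat0 : ∑ j, ind2 (at' p j) = 0 := by omega
              have hσQ0 : σQ p = 0 := hammingNorm_eq_zero.mp hq0
              have hat0' : ∀ j, at' p j = 0 := by
                intro j
                have := (Finset.sum_eq_zero_iff.mp hat0) j (Finset.mem_univ j)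
                by_contra hne
                simp [ind2, hne] at this
              apply hzero
              rw [hid p, hσQ0]
              funext q
              simp only [Pi.add_apply, Pi.zero_apply, zero_add]
              refine Finset.sum_eq_zero fun j _ => ?_
              have : z j p - α p j = 0 := by
                have := hat0' j
                simp only [hat'] at this
                rw [sub_eq_zero] at this ⊢
                exact this.symm
              rw [this, mul_zero]
            calc hammingNorm (K.mulVec (σ' p)) ≤ s := hKs _
              _ ≤ s * (hammingNorm (σQ p) + ∑ j, ind2 (at' p j)) := by
                  nlinarith [h1]
      _ = s * ∑ p, (hammingNorm (σQ p) + ∑ j, ind2 (at' p j)) := by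
          rw [Finset.mul_sum]
      _ = s * (SQ + A) := by rw [Finset.sum_add_distrib, ← hSQ, ← hAalt]
  -- natural-number distance bound
  have hdistN : distToKer (d2T HX HZ H) x ≤ (s + 1) * A + s * SQ := by
    calc distToKer (d2T HX HZ H) x ≤ hammingDist x y := distToKer_le _ _ _ hker
      _ ≤ A + ∑ p, hammingNorm (K.mulVec (σ' p)) := hdist1
      _ ≤ A + s * (SQ + A) := by omega
      _ = (s + 1) * A + s * SQ := by ring
  -- real-number main bound
  have hAR : m * (A : ℝ) ≤ (SZ : ℝ) := by
    rw [hA, hSZ]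
    push_cast
    rw [Finset.mul_sum]
    exact Finset.sum_le_sum fun j _ => key (colα j)
  have hmain : m * (distToKer (d2T HX HZ H) x : ℝ) ≤ ((s : ℝ) + 1) * ((SZ : ℝ) + SQ) := by
    rcases le_or_gt m 0 with hm | hm
    · have h1 : m * (distToKer (d2T HX HZ H) x : ℝ) ≤ 0 :=
        mul_nonpos_of_nonpos_of_nonneg hm (Nat.cast_nonneg _)
      have h2 : (0:ℝ) ≤ ((s : ℝ) + 1) * ((SZ : ℝ) + SQ) := by positivity
      linarith
    · have hm1 : m ≤ 1 := min_le_right _ _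
      have hdR : (distToKer (d2T HX HZ H) x : ℝ) ≤ ((s : ℝ) + 1) * A + s * SQ := by
        have := hdistN
        exact_mod_cast Nat.cast_le.mpr this |>.trans_eq (by push_cast; ring)
      have hSQ0 : (0:ℝ) ≤ (SQ : ℝ) := Nat.cast_nonneg _
      have hs0 : (0:ℝ) ≤ (s : ℝ) := Nat.cast_nonneg _
      nlinarith [mul_le_mul_of_nonneg_left hdR hm.le, hAR,
        mul_nonneg hs0 (mul_nonneg (sub_nonneg.mpr hm1) hSQ0)]
  -- assemble the final inequality
  rw [hσnorm]
  set NR : ℝ := ((nZ * t + n * s : ℕ) : ℝ) with hNR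
  set MR : ℝ := ((n * t + nX * s : ℕ) : ℝ) with hMR
  rcases eq_or_ne MR 0 with hM0 | hM0
  · rw [hM0, div_zero]
    positivity
  rcases eq_or_ne NR 0 with hN0 | hN0
  · rw [hN0]
    simp
  have hMpos : (0:ℝ) < MR := lt_of_le_of_ne (Nat.cast_nonneg _) (Ne.symm hM0)
  have hNpos : (0:ℝ) < NR := lt_of_le_of_ne (Nat.cast_nonneg _) (Ne.symm hN0)
  have hs1 : (0:ℝ) < (s : ℝ) + 1 := by positivity
  rw [ge_iff_le]
  have hrhs : 1 / ((s : ℝ) + 1) * m * (MR / NR) * (distToKer (d2T HX HZ H) x : ℝ) / MR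
      = m * (distToKer (d2T HX HZ H) x : ℝ) / (((s : ℝ) + 1) * NR) := by
    field_simp
  rw [hrhs, div_le_div_iff₀ (by positivity) hNpos]
  have hcast : ((SZ + SQ : ℕ) : ℝ) = (SZ : ℝ) + SQ := by push_cast; ring
  rw [hcast]
  nlinarith [hmain, hNpos.le, mul_le_mul_of_nonneg_right hmain hNpos.le]
end

section
/- With the same product chain complex, suppose the code with parity-check matrix H_X : F_2^n → F_2^{n_X} has soundness ρ_X and H : F_2^t → F_2^s has linearly independent rows. Then the code with parity-check matrix ∂_1 : (F_2^n ⊗ F_2^t) ⊕ (F_2^{n_X} ⊗ F_2^s) → F_2^{n_X} ⊗ F_2^t, given by ∂_1(α, β) = (H_X ⊗ I)(α) + (I ⊗ Hᵀ)(β), has soundness at least (1/t)·min(n_X ρ_X / n, 1)·(nt + n_X s)/(n_X t). -/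
open Matrix

/-- The boundary map `∂₁ : C₁ → C₀` of the homological product of the CSS chain complex
`(H_Zᵀ, H_X)` with the cocomplex of the classical code `H`, written as a matrix:
`∂₁(α, β) = (H_X ⊗ I) α + (I ⊗ Hᵀ) β`. -/
def d1 {Q X S T : Type*} (HX : Matrix X Q (ZMod 2))
    (H : Matrix S T (ZMod 2)) [DecidableEq T] [DecidableEq X] :
    Matrix (X × T) ((Q × T) ⊕ (X × S)) (ZMod 2) :=
  Matrix.of fun rj c =>
    match rj, c with
    | (r, j), Sum.inl (p, j') => if j = j' then HX r p else 0
    | (r, j), Sum.inr (r', q) => if r = r' then H q j else 0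

lemma hammingNorm_eq_sum {ι : Type*} [Fintype ι] [DecidableEq ι] (z : ι → ZMod 2) :
    hammingNorm z = ∑ i, if z i ≠ 0 then 1 else 0 := by
  classical
  rw [hammingNorm, Finset.card_filter]

lemma hammingNorm_eq_card {ι : Type*} [Fintype ι] [DecidableEq ι] (z : ι → ZMod 2) :
    hammingNorm z = (Finset.univ.filter (fun i => z i ≠ 0)).card := rfl

lemma exists_invertible_submatrix {s t : ℕ} (H : Matrix (Fin s) (Fin t) (ZMod 2))
    (hind : LinearIndependent (ZMod 2) (fun i : Fin s => H i)) :
    ∃ g : Fin s → Fin t, Function.Injective g ∧ IsUnit (H.submatrix id g) := by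
  classical
  have hrank : H.rank = s := by simpa using hind.rank_matrix
  have hspan : Submodule.span (ZMod 2) (Set.range Hᵀ) = ⊤ := by
    apply Submodule.eq_top_of_finrank_eq
    rw [show Set.range Hᵀ = Set.range H.col from rfl, ← Matrix.rank_eq_finrank_span_cols, hrank]
    simp [Module.finrank_pi]
  obtain ⟨b, hbsub, hbspan, hbind⟩ := exists_linearIndependent (ZMod 2) (Set.range Hᵀ)
  rw [hspan] at hbspan
  haveI : Fintype b := (Set.toFinite b).fintype
  let bas : Module.Basis b (ZMod 2) (Fin s → ZMod 2) :=
    Module.Basis.mk hbind (by rw [Subtype.range_coe]; exact hbspan.ge)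
  have hcard : Fintype.card b = s := by
    have := Module.finrank_eq_card_basis bas
    rw [Module.finrank_fin_fun] at this
    omega
  let e : Fin s ≃ b := (Fintype.equivFinOfCardEq hcard).symm
  have hchoose : ∀ q : Fin s, ∃ j : Fin t, Hᵀ j = (e q : Fin s → ZMod 2) := fun q => hbsub (e q).2
  choose g hg using hchoose
  have hginj : Function.Injective g := by
    intro q q' h
    have : (e q : Fin s → ZMod 2) = (e q' : Fin s → ZMod 2) := by rw [← hg, ← hg, h]
    exact e.injective (Subtype.ext this)
  refine ⟨g, hginj, ?_⟩
  rw [← Matrix.linearIndependent_cols_iff_isUnit]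
  have : (fun q => (H.submatrix id g)ᵀ q) = fun q => ((e q : Fin s → ZMod 2)) := by
    funext q
    rw [← hg q]
    rfl
  show LinearIndependent (ZMod 2) (fun q => (H.submatrix id g)ᵀ q)
  rw [this]
  exact hbind.comp (fun q => e q) (fun a a' h => e.injective h)

lemma d1_mulVec_apply {n nX s t : ℕ} (HX : Matrix (Fin nX) (Fin n) (ZMod 2))
    (H : Matrix (Fin s) (Fin t) (ZMod 2)) (z : (Fin n × Fin t) ⊕ (Fin nX × Fin s) → ZMod 2)
    (r : Fin nX) (j : Fin t) :
    (d1 HX H).mulVec z (r, j) =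
      (∑ p, HX r p * z (Sum.inl (p, j))) + ∑ q, H q j * z (Sum.inr (r, q)) := by
  classical
  rw [Matrix.mulVec, dotProduct, Fintype.sum_sum_type]
  congr 1
  · rw [Fintype.sum_prod_type]
    refine Finset.sum_congr rfl fun p _ => ?_
    have h : ∀ j' : Fin t, d1 HX H (r, j) (Sum.inl (p, j')) = if j = j' then HX r p else 0 :=
      fun _ => rfl
    simp only [h, ite_mul, zero_mul]
    rw [Finset.sum_ite_eq]
    simp
  · rw [Fintype.sum_prod_type]
    have h : ∀ (r' : Fin nX) (q : Fin s), d1 HX H (r, j) (Sum.inr (r', q)) =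
        if r = r' then H q j else 0 := fun _ _ => rfl
    simp only [h, ite_mul, zero_mul]
    rw [Finset.sum_comm]
    refine Finset.sum_congr rfl fun q _ => ?_
    rw [Finset.sum_ite_eq]
    simp

/-- Lemma 4 (soundness of the Z-operators): if `H_X` has soundness `ρ_X` and the classical
parity-check matrix `H` has independent checks, then the code with parity-check matrix
`∂₁` has soundness at least `(1/t) · min(n_X ρ_X / n, 1) · (nt + n_X s)/(n_X t)`. -/
theorem stmt10 (n nX nZ s t : ℕ)
    (HX : Matrix (Fin nX) (Fin n) (ZMod 2)) (HZ : Matrix (Fin nZ) (Fin n) (ZMod 2))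
    (H : Matrix (Fin s) (Fin t) (ZMod 2))
    (hchain : HX * HZ.transpose = 0)
    (hind : LinearIndependent (ZMod 2) (fun i : Fin s => H i))
    (ρX : ℝ)
    (hsound : ∀ u : Fin n → ZMod 2,
      (hammingNorm (HX.mulVec u) : ℝ) / nX ≥ ρX * (distToKer HX u : ℝ) / n) :
    ∀ x : (Fin n × Fin t) ⊕ (Fin nX × Fin s) → ZMod 2,
      (hammingNorm ((d1 HX H).mulVec x) : ℝ) / ((nX * t : ℕ) : ℝ) ≥
        (1 / (t : ℝ) * min ((nX : ℝ) * ρX / n) 1 *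
            (((n * t + nX * s : ℕ) : ℝ) / ((nX * t : ℕ) : ℝ))) *
          (distToKer (d1 HX H) x : ℝ) / ((n * t + nX * s : ℕ) : ℝ) := by
  intro x
  classical
  set E : Fin nX × Fin t → ZMod 2 := (d1 HX H).mulVec x with hE
  set d : ℕ := distToKer (d1 HX H) x with hd
  have hLHS0 : (0:ℝ) ≤ (hammingNorm E : ℝ) / ((nX * t : ℕ) : ℝ) := by positivity
  set m : ℝ := min ((nX : ℝ) * ρX / n) 1 with hmdef
  rw [ge_iff_le]
  rcases le_or_gt m 0 with hm0 | hmpos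
  · -- coefficient is nonpositive, LHS of ≤ is ≤ 0
    have h1 : 1 / (t:ℝ) * m ≤ 0 :=
      mul_nonpos_iff.mpr (Or.inl ⟨by positivity, hm0⟩)
    have h2 : 1 / (t:ℝ) * m * (((n * t + nX * s : ℕ) : ℝ) / ((nX * t : ℕ) : ℝ)) ≤ 0 :=
      mul_nonpos_iff.mpr (Or.inr ⟨h1, by positivity⟩)
    have h3 : 1 / (t:ℝ) * m * (((n * t + nX * s : ℕ) : ℝ) / ((nX * t : ℕ) : ℝ)) * (d:ℝ) ≤ 0 :=
      mul_nonpos_iff.mpr (Or.inr ⟨h2, by positivity⟩)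
    have h4 : 1 / (t:ℝ) * m * (((n * t + nX * s : ℕ) : ℝ) / ((nX * t : ℕ) : ℝ)) * (d:ℝ) /
        ((n * t + nX * s : ℕ) : ℝ) ≤ 0 :=
      div_nonpos_iff.mpr (Or.inr ⟨h3, by positivity⟩)
    linarith
  -- main case
  have hm1 : m ≤ 1 := min_le_right _ _
  have hmle : m ≤ (nX : ℝ) * ρX / n := min_le_left _ _
  have hfrac : 0 < (nX : ℝ) * ρX / n := lt_of_lt_of_le hmpos hmle
  have hn : 0 < (n : ℝ) := by
    rcases Nat.eq_zero_or_pos n with h | h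
    · rw [h] at hfrac; simp at hfrac
    · exact_mod_cast h
  have hnXρ : 0 < (nX : ℝ) * ρX := by
    rcases (div_pos_iff).mp hfrac with ⟨h, _⟩ | ⟨_, h⟩
    · exact h
    · linarith
  have hnX : 0 < (nX : ℝ) := by
    rcases Nat.eq_zero_or_pos nX with h | h
    · rw [h] at hnXρ; simp at hnXρ
    · exact_mod_cast h
  have hρ : 0 < ρX := by
    by_contra h
    push_neg at h
    nlinarith
  rcases Nat.eq_zero_or_pos t with ht0 | ht
  · subst ht0
    simp only [Nat.cast_zero, div_zero, one_div, _root_.inv_zero, zero_mul, mul_zero, zero_div]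
    positivity
  have htR : (0:ℝ) < t := by exact_mod_cast ht
  -- key inequality : m * d ≤ t * hammingNorm E
  have key : m * (d : ℝ) ≤ (t : ℝ) * (hammingNorm E : ℝ) := by
    obtain ⟨g, hginj, hMunit⟩ := exists_invertible_submatrix H hind
    have hst : s ≤ t := by
      have := Fintype.card_le_of_injective g hginj
      simpa using this
    set M : Matrix (Fin s) (Fin s) (ZMod 2) := H.submatrix id g with hMdef
    have hdet : IsUnit M.det := (Matrix.isUnit_iff_isUnit_det M).mp hMunit
    have hMl : M⁻¹ * M = 1 := Matrix.nonsing_inv_mul M hdet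
    have hMr : M * M⁻¹ = 1 := Matrix.mul_nonsing_inv M hdet
    have hz2 : ∀ a : ZMod 2, a + a = 0 := by decide
    -- matrices
    set Amat : Matrix (Fin n) (Fin t) (ZMod 2) :=
      Matrix.of (fun p j => x (Sum.inl (p, j))) with hAdef
    set Bmat : Matrix (Fin nX) (Fin s) (ZMod 2) :=
      Matrix.of (fun r q => x (Sum.inr (r, q))) with hBdef
    set Emat : Matrix (Fin nX) (Fin t) (ZMod 2) := Matrix.of (fun r j => E (r, j)) with hEMdef
    have hEmat : Emat = HX * Amat + Bmat * H := by
      ext r j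
      show (d1 HX H).mulVec x (r, j) = (HX * Amat + Bmat * H) r j
      rw [d1_mulVec_apply HX H x r j]
      rw [Matrix.add_apply, Matrix.mul_apply, Matrix.mul_apply]
      congr 1
      exact Finset.sum_congr rfl fun q _ => mul_comm _ _
    set B'' : Matrix (Fin nX) (Fin s) (ZMod 2) := Emat.submatrix id g * M⁻¹ with hB''def
    have F2 : B'' * M = Emat.submatrix id g := by
      rw [hB''def, Matrix.mul_assoc, hMl, Matrix.mul_one]
    set Cmat : Matrix (Fin nX) (Fin s) (ZMod 2) := Bmat + B'' with hCdef
    have hBHsub : (Bmat * H).submatrix id g = Bmat * M := by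
      rw [Matrix.submatrix_mul Bmat H id id g Function.bijective_id, Matrix.submatrix_id_id]
    have hHAsub : (HX * Amat).submatrix id g = HX * Amat.submatrix id g := by
      rw [Matrix.submatrix_mul HX Amat id id g Function.bijective_id, Matrix.submatrix_id_id]
    have hEsub : Emat.submatrix id g = HX * Amat.submatrix id g + Bmat * M := by
      have h0 : Emat.submatrix id g = (HX * Amat).submatrix id g + (Bmat * H).submatrix id g := by
        rw [hEmat]; rfl
      rw [h0, hBHsub, hHAsub]
    have hCM : Cmat * M = HX * Amat.submatrix id g := by
      rw [hCdef, Matrix.add_mul, F2, hEsub]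
      ext r q
      simp only [Matrix.add_apply]
      have hz3 : ∀ a b : ZMod 2, b + (a + b) = a := by decide
      exact hz3 _ _
    set Wmat : Matrix (Fin n) (Fin s) (ZMod 2) := Amat.submatrix id g * M⁻¹ with hWdef
    have hCW : Cmat = HX * Wmat := by
      have : Cmat * (M * M⁻¹) = HX * Wmat := by
        rw [← Matrix.mul_assoc, hCM, hWdef, Matrix.mul_assoc]
      rw [← this, hMr, Matrix.mul_one]
    set E''mat : Matrix (Fin nX) (Fin t) (ZMod 2) := Emat + B'' * H with hE''def
    set Vmat : Matrix (Fin n) (Fin t) (ZMod 2) := Amat + Wmat * H with hVdef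
    have hE''V : E''mat = HX * Vmat := by
      rw [hE''def, hEmat, hVdef, Matrix.mul_add, ← Matrix.mul_assoc, ← hCW, hCdef,
        Matrix.add_mul]
      abel
    have F4 : ∀ (r : Fin nX) (q : Fin s), E''mat r (g q) = 0 := by
      intro r q
      have h' : E''mat.submatrix id g = Emat.submatrix id g + (B'' * H).submatrix id g := by
        rw [hE''def]; rfl
      have h : E''mat.submatrix id g = Emat.submatrix id g + Emat.submatrix id g := by
        rw [h', Matrix.submatrix_mul B'' H id id g Function.bijective_id,
          Matrix.submatrix_id_id, F2]
      have := congrFun (congrFun h r) q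
      simp only [Matrix.submatrix_apply, id_eq, Matrix.add_apply] at this
      rw [this, hz2]
    -- soundness applied to each column
    have husound : ∀ j : Fin t, ∃ u : Fin n → ZMod 2,
        HX.mulVec u = (fun r => E''mat r j) ∧
        m * (hammingNorm u : ℝ) ≤ (hammingNorm (fun r => E''mat r j) : ℝ) := by
      intro j
      set vj : Fin n → ZMod 2 := fun p => Vmat p j with hvj
      have hvmul : HX.mulVec vj = fun r => E''mat r j := by
        funext r
        rw [hE''V]
        simp [Matrix.mulVec, dotProduct, Matrix.mul_apply, hvj]
      have hne : (hammingDist vj '' {y | HX.mulVec y = 0}).Nonempty :=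
        ⟨hammingDist vj 0, 0, by simp, rfl⟩
      have hmem := Nat.sInf_mem hne
      obtain ⟨k, hk0, hkd⟩ := hmem
      refine ⟨vj - k, ?_, ?_⟩
      · rw [Matrix.mulVec_sub, hk0, sub_zero, hvmul]
      · have hdge := hsound vj
        rw [hvmul] at hdge
        have e0 : hammingNorm (vj - k) = distToKer HX vj := by
          rw [show vj - k = -k + vj by abel, ← hammingDist_eq_hammingNorm, hammingDist_comm]
          exact hkd
        rw [e0]
        have h5 : ρX * (distToKer HX vj : ℝ) / n ≤ (hammingNorm (fun r => E''mat r j) : ℝ) / nX :=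
          hdge
        have hd0 : (0:ℝ) ≤ (distToKer HX vj : ℝ) := Nat.cast_nonneg _
        calc m * (distToKer HX vj : ℝ) ≤ ((nX : ℝ) * ρX / n) * (distToKer HX vj : ℝ) :=
              mul_le_mul_of_nonneg_right hmle hd0
          _ = (nX : ℝ) * (ρX * (distToKer HX vj : ℝ) / n) := by ring
          _ ≤ (nX : ℝ) * ((hammingNorm (fun r => E''mat r j) : ℝ) / nX) :=
              mul_le_mul_of_nonneg_left h5 hnX.le
          _ = (hammingNorm (fun r => E''mat r j) : ℝ) := by field_simp
    choose u hu1 hu2 using husound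
    -- the correction vector and the kernel element
    set δ : (Fin n × Fin t) ⊕ (Fin nX × Fin s) → ZMod 2 :=
      Sum.elim (fun pj => u pj.2 pj.1) (fun rq => B'' rq.1 rq.2) with hδdef
    have hker : (d1 HX H).mulVec (x + δ) = 0 := by
      funext rj
      obtain ⟨r, j⟩ := rj
      rw [Matrix.mulVec_add]
      have hx' : (d1 HX H).mulVec x (r, j) = E (r, j) := rfl
      have hδ' : (d1 HX H).mulVec δ (r, j) =
          (∑ p, HX r p * u j p) + ∑ q, H q j * B'' r q := by
        rw [d1_mulVec_apply HX H δ r j]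
        rfl
      have h1 : (∑ p, HX r p * u j p) = E''mat r j := by
        have := congrFun (hu1 j) r
        rw [← this]
        rfl
      have h2 : (∑ q, H q j * B'' r q) = (B'' * H) r j := by
        rw [Matrix.mul_apply]
        exact Finset.sum_congr rfl fun q _ => mul_comm _ _
      have h3 : E''mat r j = E (r, j) + (B'' * H) r j := by
        rw [hE''def]; rfl
      show (d1 HX H).mulVec x (r, j) + (d1 HX H).mulVec δ (r, j) = 0
      rw [hx', hδ', h1, h2, h3]
      rw [add_assoc (E (r,j)), hz2, add_zero, hz2]
    -- distance bound
    have hdle : (d : ℝ) ≤ (hammingNorm δ : ℝ) := by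
      have hmem : hammingNorm δ ∈ hammingDist x '' {y | (d1 HX H).mulVec y = 0} := by
        refine ⟨x + δ, hker, ?_⟩
        rw [hammingDist_eq_hammingNorm]
        congr 1
        funext c
        have : ∀ a b : ZMod 2, a - (a + b) = b := by decide
        exact neg_add_cancel_left (x c) (δ c)
      have := Nat.sInf_le hmem
      exact_mod_cast this
    -- counting
    set Rset : Finset (Fin nX) := Finset.univ.filter (fun r => ∃ q, E (r, g q) ≠ 0) with hRsetdef
    set R : ℕ := Rset.card with hRdef
    have F1 : ∀ r, r ∉ Rset → ∀ q, B'' r q = 0 := by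
      intro r hr q
      simp only [hRsetdef, Finset.mem_filter, Finset.mem_univ, true_and, not_exists,
        not_not] at hr
      rw [hB''def, Matrix.mul_apply]
      refine Finset.sum_eq_zero fun q' _ => ?_
      have h0 : Emat (id r) (g q') = 0 := hr q'
      rw [Matrix.submatrix_apply, h0, zero_mul]
    set wE : Fin t → ℕ := fun j => hammingNorm (fun r => E (r, j)) with hwEdef
    set wE'' : Fin t → ℕ := fun j => hammingNorm (fun r => E''mat r j) with hwE''def
    have hNtot : hammingNorm E = ∑ j, wE j := by
      rw [hammingNorm_eq_sum, Fintype.sum_prod_type, Finset.sum_comm]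
      refine Finset.sum_congr rfl fun j _ => ?_
      simp only [hwEdef, hammingNorm_eq_sum]
    have hδnorm : hammingNorm δ =
        (∑ j, hammingNorm (u j)) + hammingNorm (fun rq : Fin nX × Fin s => B'' rq.1 rq.2) := by
      rw [hammingNorm_eq_sum, Fintype.sum_sum_type]
      congr 1
      · rw [Fintype.sum_prod_type, Finset.sum_comm]
        refine Finset.sum_congr rfl fun j _ => ?_
        rw [hammingNorm_eq_sum]
        rfl
      · rw [hammingNorm_eq_sum]
        rfl
    have hB''le : hammingNorm (fun rq : Fin nX × Fin s => B'' rq.1 rq.2) ≤ s * R := by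
      rw [hammingNorm_eq_card]
      have hsub : Finset.filter (fun rq : Fin nX × Fin s => B'' rq.1 rq.2 ≠ 0) Finset.univ ⊆
          Rset ×ˢ Finset.univ := by
        intro rq hrq
        simp only [Finset.mem_filter, Finset.mem_univ, true_and] at hrq
        rw [Finset.mem_product]
        refine ⟨?_, Finset.mem_univ _⟩
        by_contra hr
        exact hrq (F1 rq.1 hr rq.2)
      calc _ ≤ (Rset ×ˢ (Finset.univ : Finset (Fin s))).card := Finset.card_le_card hsub
        _ = R * s := by rw [Finset.card_product, Finset.card_univ, Fintype.card_fin]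
        _ = s * R := Nat.mul_comm _ _
    have hwE''le : ∀ j, wE'' j ≤ wE j + R := by
      intro j
      simp only [hwE''def, hwEdef]
      rw [hammingNorm_eq_card, hammingNorm_eq_card]
      have hsub : Finset.filter (fun r => E''mat r j ≠ 0) Finset.univ ⊆
          (Finset.filter (fun r => E (r, j) ≠ 0) Finset.univ) ∪ Rset := by
        intro r hr
        simp only [Finset.mem_filter, Finset.mem_univ, true_and] at hr
        rw [Finset.mem_union]
        by_cases hrR : r ∈ Rset
        · exact Or.inr hrR
        · left
          simp only [Finset.mem_filter, Finset.mem_univ, true_and]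
          intro h0
          apply hr
          have h3 : E''mat r j = E (r, j) + (B'' * H) r j := by rw [hE''def]; rfl
          have h4 : (B'' * H) r j = 0 := by
            rw [Matrix.mul_apply]
            exact Finset.sum_eq_zero fun q _ => by rw [F1 r hrR q, zero_mul]
          rw [h3, h4, h0, add_zero]
      calc _ ≤ ((Finset.filter (fun r => E (r, j) ≠ 0) Finset.univ) ∪ Rset).card :=
            Finset.card_le_card hsub
        _ ≤ _ + Rset.card := Finset.card_union_le _ _
    have hJ0 : ∀ q, wE'' (g q) = 0 := by
      intro q
      simp only [hwE''def]
      rw [hammingNorm_eq_zero]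
      funext r
      exact F4 r q
    have hRle : R ≤ ∑ q, wE (g q) := by
      have h7 : ∀ r ∈ Rset, 1 ≤ ∑ q, (if E (r, g q) ≠ 0 then 1 else 0) := by
        intro r hr
        simp only [hRsetdef, Finset.mem_filter, Finset.mem_univ, true_and] at hr
        obtain ⟨q, hq⟩ := hr
        calc (1:ℕ) = if E (r, g q) ≠ 0 then 1 else 0 := by simp [hq]
          _ ≤ ∑ q', (if E (r, g q') ≠ 0 then 1 else 0) :=
            Finset.single_le_sum (f := fun q' => if E (r, g q') ≠ 0 then 1 else 0)
              (fun _ _ => Nat.zero_le _) (Finset.mem_univ q)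
      calc R = ∑ _r ∈ Rset, 1 := by rw [hRdef, Finset.card_eq_sum_ones]
        _ ≤ ∑ r ∈ Rset, ∑ q, (if E (r, g q) ≠ 0 then 1 else 0) := Finset.sum_le_sum h7
        _ ≤ ∑ r, ∑ q, (if E (r, g q) ≠ 0 then 1 else 0) :=
            Finset.sum_le_sum_of_subset (Finset.subset_univ _)
        _ = ∑ q, ∑ r, (if E (r, g q) ≠ 0 then 1 else 0) := Finset.sum_comm
        _ = ∑ q, wE (g q) := by
            refine Finset.sum_congr rfl fun q _ => ?_
            simp only [hwEdef, hammingNorm_eq_sum]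
    -- real arithmetic assembly
    set Jset : Finset (Fin t) := Finset.univ.image g with hJdef
    have hJcard : Jset.card = s := by
      rw [hJdef, Finset.card_image_of_injective _ hginj, Finset.card_univ, Fintype.card_fin]
    have hJccard : Jsetᶜ.card = t - s := by
      rw [Finset.card_compl, hJcard, Fintype.card_fin]
    set W1 : ℝ := ∑ j ∈ Jsetᶜ, (wE j : ℝ) with hW1def
    set W2 : ℝ := ∑ j ∈ Jset, (wE j : ℝ) with hW2def
    have hW1nn : 0 ≤ W1 := Finset.sum_nonneg fun _ _ => Nat.cast_nonneg _
    have hW2nn : 0 ≤ W2 := Finset.sum_nonneg fun _ _ => Nat.cast_nonneg _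
    have hRnn : (0:ℝ) ≤ (R:ℝ) := Nat.cast_nonneg _
    have r1 : (hammingNorm E : ℝ) = W1 + W2 := by
      rw [hNtot]
      push_cast
      rw [hW1def, hW2def, ← Finset.sum_add_sum_compl Jset (fun j => (wE j : ℝ))]
      ring
    have r2 : ∑ j, (wE'' j : ℝ) ≤ W1 + ((t:ℝ) - s) * R := by
      rw [← Finset.sum_add_sum_compl Jset (fun j => (wE'' j : ℝ))]
      have hA0 : ∑ j ∈ Jset, (wE'' j : ℝ) = 0 := by
        refine Finset.sum_eq_zero fun j hj => ?_
        rw [hJdef] at hj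
        obtain ⟨q, -, rfl⟩ := Finset.mem_image.mp hj
        rw [hJ0 q, Nat.cast_zero]
      rw [hA0, zero_add]
      calc ∑ j ∈ Jsetᶜ, (wE'' j : ℝ) ≤ ∑ j ∈ Jsetᶜ, ((wE j : ℝ) + R) :=
            Finset.sum_le_sum fun j _ => by exact_mod_cast hwE''le j
        _ = W1 + (Jsetᶜ.card : ℝ) * R := by
            rw [Finset.sum_add_distrib, Finset.sum_const, nsmul_eq_mul, hW1def]
        _ = W1 + ((t:ℝ) - s) * R := by
            rw [hJccard]
            congr 1
            congr 1
            rw [Nat.cast_sub hst]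
    have r4 : (R : ℝ) ≤ W2 := by
      have h9 : (∑ j ∈ Jset, wE j) = ∑ q, wE (g q) := by
        rw [hJdef]
        exact Finset.sum_image (fun q _ q' _ h => hginj h)
      have : R ≤ ∑ j ∈ Jset, wE j := by rw [h9]; exact hRle
      rw [hW2def]
      push_cast
      exact_mod_cast this
    have r3 : m * (hammingNorm δ : ℝ) ≤ (W1 + ((t:ℝ) - s) * R) + (s:ℝ) * R := by
      rw [hδnorm]
      push_cast
      rw [mul_add]
      have p1 : m * (∑ j, (hammingNorm (u j) : ℝ)) ≤ W1 + ((t:ℝ) - s) * R := by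
        rw [Finset.mul_sum]
        calc ∑ j, m * (hammingNorm (u j) : ℝ) ≤ ∑ j, (wE'' j : ℝ) :=
              Finset.sum_le_sum fun j _ => hu2 j
          _ ≤ W1 + ((t:ℝ) - s) * R := r2
      have p2 : m * (hammingNorm (fun rq : Fin nX × Fin s => B'' rq.1 rq.2) : ℝ) ≤ (s:ℝ) * R := by
        calc m * (hammingNorm (fun rq : Fin nX × Fin s => B'' rq.1 rq.2) : ℝ)
            ≤ 1 * (hammingNorm (fun rq : Fin nX × Fin s => B'' rq.1 rq.2) : ℝ) :=
              mul_le_mul_of_nonneg_right hm1 (Nat.cast_nonneg _)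
          _ = (hammingNorm (fun rq : Fin nX × Fin s => B'' rq.1 rq.2) : ℝ) := one_mul _
          _ ≤ (s:ℝ) * R := by exact_mod_cast hB''le
      exact add_le_add p1 p2
    have ht1 : (1:ℝ) ≤ (t:ℝ) := by exact_mod_cast ht
    have hsR : (s:ℝ) ≤ (t:ℝ) := by exact_mod_cast hst
    calc m * (d:ℝ) ≤ m * (hammingNorm δ : ℝ) := mul_le_mul_of_nonneg_left hdle hmpos.le
      _ ≤ (W1 + ((t:ℝ) - s) * R) + (s:ℝ) * R := r3
      _ = W1 + (t:ℝ) * R := by ring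
      _ ≤ (t:ℝ) * W1 + (t:ℝ) * W2 := by
          have q1 : (t:ℝ) * R ≤ (t:ℝ) * W2 :=
            mul_le_mul_of_nonneg_left r4 (by linarith)
          have q2 : W1 ≤ (t:ℝ) * W1 := le_mul_of_one_le_left hW1nn ht1
          linarith
      _ = (t:ℝ) * (hammingNorm E : ℝ) := by rw [r1]; ring
  -- conclude by algebra
  have hNT : (0:ℝ) < ((nX * t : ℕ) : ℝ) := by
    have : 0 < nX * t := Nat.mul_pos (by exact_mod_cast hnX) ht
    exact_mod_cast this
  have hN1 : (0:ℝ) < ((n * t + nX * s : ℕ) : ℝ) := by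
    have : 0 < n * t := Nat.mul_pos (by exact_mod_cast hn) ht
    have : 0 < n * t + nX * s := by omega
    exact_mod_cast this
  have heq : 1 / (t:ℝ) * m * (((n * t + nX * s : ℕ) : ℝ) / ((nX * t : ℕ) : ℝ)) * (d:ℝ) /
      ((n * t + nX * s : ℕ) : ℝ) = m * (d:ℝ) / ((t:ℝ) * ((nX * t : ℕ) : ℝ)) := by
    field_simp
  rw [heq, div_le_div_iff₀ (by positivity) hNT]
  calc m * (d:ℝ) * ((nX * t : ℕ) : ℝ) ≤ ((t:ℝ) * (hammingNorm E : ℝ)) * ((nX * t : ℕ) : ℝ) := by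
        apply mul_le_mul_of_nonneg_right key hNT.le
    _ = (hammingNorm E : ℝ) * ((t:ℝ) * ((nX * t : ℕ) : ℝ)) := by ring
end

section
/- For the CSS code Q with H_Z = [I_n | I_n] and H_X = [Ĥ | Ĥ], where ker(Ĥ) is a classical [n, k, d] code: the quantum code Q has dimension k, Z-distance d, and X-distance 2. -/
open Matrix

/-- `S` has minimum Hamming weight `d`. -/
def isMinWt {Q : Type*} [Fintype Q] (S : Set (Q → ZMod 2)) (d : ℕ) : Prop :=
  (∀ v ∈ S, d ≤ hammingNorm v) ∧ ∃ v ∈ S, hammingNorm v = d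

section aux

variable {α β : Type*} [Fintype α] [Fintype β]

lemma hn_sum (v : (α ⊕ β) → ZMod 2) :
    hammingNorm v = hammingNorm (v ∘ Sum.inl) + hammingNorm (v ∘ Sum.inr) := by
  classical
  simp only [hammingNorm, Finset.card_filter, Fintype.sum_sum_type, Function.comp_apply]

lemma hn_add_le (a b : α → ZMod 2) :
    hammingNorm (a + b) ≤ hammingNorm a + hammingNorm b := by
  have h := hammingDist_triangle (a + b) b 0
  rw [hammingDist_zero_right, hammingDist_zero_right, hammingDist_eq_hammingNorm,
    show -(a + b) + b = a from funext fun i =>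
      (show ∀ x y : ZMod 2, -(x + y) + y = x by decide) (a i) (b i)] at h
  exact h.trans (by omega)

lemma hn_elim (a b : α → ZMod 2) :
    hammingNorm (Sum.elim a b) = hammingNorm a + hammingNorm b := by
  rw [hn_sum]; rfl

lemma zmod2_add_eq_zero {a b : ZMod 2} (h : a + b = 0) : b = a := by
  revert h; revert a b; decide

lemma hn_single {n : ℕ} (i : Fin n) : hammingNorm ((Pi.single i 1 : Fin n → ZMod 2)) = 1 := by
  classical
  simp [hammingNorm, Pi.single_apply, Finset.filter_eq']

end aux

/-- For the CSS code `Q` with `H_Z = [I | I]` and `H_X = [Ĥ | Ĥ]`, where `ker Ĥ` is a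
classical `[n, k, d]` code (`k ≥ 1`, `d ≥ 2`): the quantum code `Q` has dimension `k`
(as `dim(ker H_X / im H_Zᵀ)`), Z-distance `d`, and X-distance `2`. -/
theorem stmt18 (n m k d : ℕ) (Hhat : Matrix (Fin m) (Fin n) (ZMod 2))
    (hk1 : 1 ≤ k) (hd2 : 2 ≤ d)
    (hk : Module.finrank (ZMod 2) (LinearMap.ker Hhat.mulVecLin) = k)
    (hd : isMinWt {v : Fin n → ZMod 2 | Hhat.mulVec v = 0 ∧ v ≠ 0} d)
    (HX : Matrix (Fin m) (Fin n ⊕ Fin n) (ZMod 2))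
    (HZ : Matrix (Fin n) (Fin n ⊕ Fin n) (ZMod 2))
    (hHX : HX = Matrix.fromCols Hhat Hhat)
    (hHZ : HZ = Matrix.fromCols (1 : Matrix (Fin n) (Fin n) (ZMod 2))
      (1 : Matrix (Fin n) (Fin n) (ZMod 2))) :
    Module.finrank (ZMod 2)
        (LinearMap.ker HX.mulVecLin ⧸
          (LinearMap.range HZ.transpose.mulVecLin).comap
            (LinearMap.ker HX.mulVecLin).subtype) = k ∧
      isMinWt {v : Fin n ⊕ Fin n → ZMod 2 |
          HX.mulVec v = 0 ∧ v ∉ Set.range HZ.transpose.mulVec} d ∧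
      isMinWt {v : Fin n ⊕ Fin n → ZMod 2 |
          HZ.mulVec v = 0 ∧ v ∉ Set.range HX.transpose.mulVec} 2 := by
  classical
  subst hHX hHZ
  -- the "sum of halves" linear map
  set σ : ((Fin n ⊕ Fin n) → ZMod 2) →ₗ[ZMod 2] (Fin n → ZMod 2) :=
    LinearMap.funLeft (ZMod 2) (ZMod 2) Sum.inl + LinearMap.funLeft (ZMod 2) (ZMod 2) Sum.inr
    with hσdef
  have hσ : ∀ v : (Fin n ⊕ Fin n) → ZMod 2, σ v = (v ∘ Sum.inl) + (v ∘ Sum.inr) := fun v => rfl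
  -- basic mulVec computations
  have hHXv : ∀ v : (Fin n ⊕ Fin n) → ZMod 2,
      (fromCols Hhat Hhat).mulVec v = Hhat.mulVec (σ v) := by
    intro v
    conv_lhs => rw [← Sum.elim_comp_inl_inr v]
    rw [fromCols_mulVec_sumElim, hσ]
    rw [show Hhat.mulVec ((v ∘ Sum.inl) + (v ∘ Sum.inr))
        = Hhat.mulVec (v ∘ Sum.inl) + Hhat.mulVec (v ∘ Sum.inr) from
      map_add Hhat.mulVecLin _ _]
  have hHZv : ∀ v : (Fin n ⊕ Fin n) → ZMod 2,
      (fromCols (1 : Matrix (Fin n) (Fin n) (ZMod 2)) 1).mulVec v = σ v := by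
    intro v
    conv_lhs => rw [← Sum.elim_comp_inl_inr v]
    rw [fromCols_mulVec_sumElim, one_mulVec, one_mulVec, hσ]
  have hHZT : ∀ c : Fin n → ZMod 2,
      (fromCols (1 : Matrix (Fin n) (Fin n) (ZMod 2)) 1)ᵀ.mulVec c = Sum.elim c c := by
    intro c
    rw [transpose_fromCols, fromRows_mulVec, transpose_one, one_mulVec]
  have hHXT : ∀ u : Fin m → ZMod 2,
      (fromCols Hhat Hhat)ᵀ.mulVec u = Sum.elim (Hhatᵀ.mulVec u) (Hhatᵀ.mulVec u) := by
    intro u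
    rw [transpose_fromCols, fromRows_mulVec]
  -- characterization of the range of HZᵀ
  have hrange : ∀ v : (Fin n ⊕ Fin n) → ZMod 2,
      (∃ c, (fromCols (1 : Matrix (Fin n) (Fin n) (ZMod 2)) 1)ᵀ.mulVec c = v) ↔ σ v = 0 := by
    intro v
    constructor
    · rintro ⟨c, rfl⟩
      rw [hHZT, hσ]
      ext i
      simp [CharTwo.add_self_eq_zero]
    · intro h
      refine ⟨v ∘ Sum.inl, ?_⟩
      rw [hHZT]
      have h2 : v ∘ Sum.inr = v ∘ Sum.inl := by
        have := hσ v ▸ h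
        funext i
        have hi := congrFun this i
        simp only [Pi.add_apply, Pi.zero_apply] at hi
        exact zmod2_add_eq_zero hi
      funext x
      cases x with
      | inl i => rfl
      | inr i => exact (congrFun h2 i).symm
  refine ⟨?_, ⟨?_, ?_⟩, ⟨?_, ?_⟩⟩
  · -- dimension
    set K := LinearMap.ker (fromCols Hhat Hhat).mulVecLin with hK
    have hmemK : ∀ v : (Fin n ⊕ Fin n) → ZMod 2, v ∈ K ↔ Hhat.mulVec (σ v) = 0 := by
      intro v
      rw [hK, LinearMap.mem_ker, mulVecLin_apply, hHXv]
    have hmap : ∀ x : K, (σ ∘ₗ K.subtype) x ∈ LinearMap.ker Hhat.mulVecLin := by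
      intro x
      rw [LinearMap.mem_ker, mulVecLin_apply]
      exact (hmemK x.1).mp x.2
    set φ : K →ₗ[ZMod 2] LinearMap.ker Hhat.mulVecLin :=
      LinearMap.codRestrict _ (σ ∘ₗ K.subtype) hmap with hφ
    have hsurj : Function.Surjective φ := by
      rintro ⟨c, hc⟩
      have hcv : (fromCols Hhat Hhat).mulVec (Sum.elim c 0) = 0 := by
        rw [hHXv, hσ]
        have : (Sum.elim c (0 : Fin n → ZMod 2)) ∘ Sum.inl + Sum.elim c 0 ∘ Sum.inr = c := by
          funext i; simp
        rw [this]
        exact hc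
      refine ⟨⟨Sum.elim c 0, (hmemK _).mpr (by rw [← hHXv]; exact hcv)⟩, ?_⟩
      apply Subtype.ext
      show σ (Sum.elim c 0) = c
      rw [hσ]
      funext i; simp
    have hker : LinearMap.ker φ
        = (LinearMap.range (fromCols (1 : Matrix (Fin n) (Fin n) (ZMod 2)) 1)ᵀ.mulVecLin).comap
            K.subtype := by
      ext ⟨v, hv⟩
      rw [LinearMap.mem_ker, Submodule.mem_comap]
      constructor
      · intro h
        have hσv : σ v = 0 := congrArg Subtype.val h
        rcases (hrange v).mpr hσv with ⟨c, hc⟩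
        exact ⟨c, by rw [mulVecLin_apply]; exact hc⟩
      · rintro ⟨c, hc⟩
        apply Subtype.ext
        show σ v = 0
        exact (hrange v).mp ⟨c, by rw [← mulVecLin_apply]; exact hc⟩
    rw [← hker]
    have e := LinearMap.quotKerEquivOfSurjective φ hsurj
    rw [LinearEquiv.finrank_eq e]
    exact hk
  · -- Z-distance lower bound
    rintro v ⟨hv1, hv2⟩
    have hσv : σ v ≠ 0 := by
      intro h
      exact hv2 ((hrange v).mpr h)
    have hker : Hhat.mulVec (σ v) = 0 := by rw [← hHXv]; exact hv1
    have hle := hd.1 (σ v) ⟨hker, hσv⟩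
    calc d ≤ hammingNorm (σ v) := hle
      _ ≤ hammingNorm (v ∘ Sum.inl) + hammingNorm (v ∘ Sum.inr) := by
          rw [hσ]; exact hn_add_le _ _
      _ = hammingNorm v := (hn_sum v).symm
  · -- Z-distance achieved
    obtain ⟨c, ⟨hc1, hc2⟩, hcw⟩ := hd.2
    refine ⟨Sum.elim c 0, ⟨?_, ?_⟩, ?_⟩
    · rw [hHXv, hσ]
      have : (Sum.elim c (0 : Fin n → ZMod 2)) ∘ Sum.inl + Sum.elim c 0 ∘ Sum.inr = c := by
        funext i; simp
      rw [this]; exact hc1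
    · intro hmem
      rcases hmem with ⟨u, hu⟩
      have : σ (Sum.elim c 0) = 0 := (hrange _).mp ⟨u, hu⟩
      rw [hσ] at this
      apply hc2
      have hc : (Sum.elim c (0 : Fin n → ZMod 2)) ∘ Sum.inl + Sum.elim c 0 ∘ Sum.inr = c := by
        funext i; simp
      rw [hc] at this
      exact this
    · rw [hn_elim, hammingNorm_zero, add_zero, hcw]
  · -- X-distance lower bound
    rintro v ⟨hv1, hv2⟩
    have hσv : σ v = 0 := by rw [← hHZv]; exact hv1
    have heq : v ∘ Sum.inr = v ∘ Sum.inl := by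
      rw [hσ] at hσv
      funext i
      have hi := congrFun hσv i
      simp only [Pi.add_apply, Pi.zero_apply] at hi
      exact zmod2_add_eq_zero hi
    have hvne : v ≠ 0 := by
      rintro rfl
      exact hv2 ⟨0, by rw [mulVec_zero]⟩
    have hinl : v ∘ Sum.inl ≠ 0 := by
      intro h0
      apply hvne
      funext x
      cases x with
      | inl i => exact congrFun h0 i
      | inr i => rw [show v (Sum.inr i) = v (Sum.inl i) from congrFun heq i]; exact congrFun h0 i
    have h1 : 1 ≤ hammingNorm (v ∘ Sum.inl) := hammingNorm_pos_iff.mpr hinl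
    rw [hn_sum, heq]
    omega
  · -- X-distance achieved
    have hex : ∃ i : Fin n, (Pi.single i 1 : Fin n → ZMod 2) ∉
        LinearMap.range Hhatᵀ.mulVecLin := by
      by_contra h
      push_neg at h
      have htop : LinearMap.range Hhatᵀ.mulVecLin = ⊤ := by
        rw [← top_le_iff, ← (Pi.basisFun (ZMod 2) (Fin n)).span_eq, Submodule.span_le]
        rintro x ⟨i, rfl⟩
        simpa [Pi.basisFun_apply] using h i
      have hrk : Hhatᵀ.rank = n := by
        rw [Matrix.rank, htop, finrank_top, Module.finrank_fintype_fun_eq_card,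
          Fintype.card_fin]
      rw [Matrix.rank_transpose] at hrk
      have hrn := LinearMap.finrank_range_add_finrank_ker Hhat.mulVecLin
      rw [Module.finrank_fintype_fun_eq_card, Fintype.card_fin] at hrn
      have : Hhat.rank = Module.finrank (ZMod 2) (LinearMap.range Hhat.mulVecLin) := rfl
      omega
    obtain ⟨i, hi⟩ := hex
    set e : Fin n → ZMod 2 := Pi.single i 1 with he
    refine ⟨Sum.elim e e, ⟨?_, ?_⟩, ?_⟩
    · rw [hHZv, hσ]
      funext j
      simp [CharTwo.add_self_eq_zero]
    · rintro ⟨u, hu⟩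
      rw [hHXT] at hu
      apply hi
      refine ⟨u, ?_⟩
      rw [mulVecLin_apply]
      funext j
      exact congrFun hu (Sum.inl j)
    · rw [hn_elim, he, hn_single]
end
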